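/- arXiv:1908.02655 — 4 statements merged into one kernel-verified Lean document; each statement's English description precedes it below -/
import Mathlib

section
/- Conversely, if u: ℝ³ → ℝ³ is a C¹ vector field independent of the second coordinate ȳ satisfying ∇×u = αu with α ≠ 0, and ψ is a stream function with u_1 = -ψ_z, u_3 = ψ_{x̄} on a simply connected planar domain, then u_2 = αψ + β for some constant β, and ψ satisfies ψ_{x̄x̄} + ψ_{zz} + α²ψ + αβ = 0. -/
open Set Filter Metric

/-- A differentiable function with vanishing derivative on an open preconnected set is constant. -/
lemma const_of_fderiv_zero_aux {f : ℝ × ℝ → ℝ} {s : Set (ℝ × ℝ)} (hs : IsOpen s)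
    (hc : IsPreconnected s) (hf : ∀ p ∈ s, DifferentiableAt ℝ f p)
    (h0 : ∀ p ∈ s, fderiv ℝ f p = 0) :
    ∀ p ∈ s, ∀ q ∈ s, f p = f q := by
  -- local constancy: for every `c`, `{x ∈ s | f x = c}` is open
  have hloc : ∀ c : ℝ, IsOpen {x | x ∈ s ∧ f x = c} := by
    intro c
    rw [Metric.isOpen_iff]
    rintro x ⟨hxs, hxc⟩
    obtain ⟨ε, hε, hball⟩ := Metric.isOpen_iff.1 hs x hxs
    refine ⟨ε, hε, fun y hy => ⟨hball hy, ?_⟩⟩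
    have hconv : Convex ℝ (ball x ε) := convex_ball x ε
    have hdiff : DifferentiableOn ℝ f (ball x ε) := fun z hz =>
      (hf z (hball hz)).differentiableWithinAt
    have hzero : ∀ z ∈ ball x ε, fderivWithin ℝ f (ball x ε) z = 0 := fun z hz => by
      rw [fderivWithin_of_isOpen isOpen_ball hz]; exact h0 z (hball hz)
    have := hconv.is_const_of_fderivWithin_eq_zero hdiff hzero hy (mem_ball_self hε)
    rw [this, hxc]
  intro p hp q hq
  haveI : PreconnectedSpace s := Subtype.preconnectedSpace hc
  have hcont : Continuous fun x : s => f x := by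
    apply continuous_iff_continuousAt.2
    intro x
    exact ((hf x x.2).continuousAt.comp continuous_subtype_val.continuousAt)
  have hclopen : IsClopen {x : s | f x = f p} := by
    constructor
    · exact isClosed_singleton.preimage hcont
    · have : {x : s | f x = f p} = Subtype.val ⁻¹' {x | x ∈ s ∧ f x = f p} := by
        ext x; simp [x.2]
      rw [this]
      exact (hloc (f p)).preimage continuous_subtype_val
  rcases isClopen_iff.1 hclopen with h | h
  · have hmem : (⟨p, hp⟩ : s) ∈ {x : s | f x = f p} := rfl
    rw [h] at hmem
    exact hmem.elim
  · have hmem : (⟨q, hq⟩ : s) ∈ {x : s | f x = f p} := by rw [h]; trivial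
    exact hmem.symm

/-- Conversely, a `ȳ`-independent Beltrami field with `α ≠ 0` and stream function `ψ`
(`u₁ = -ψ_z`, `u₃ = ψ_{x̄}`) on a connected planar domain satisfies `u₂ = αψ + β` for a
constant `β`, and `ψ_{x̄x̄} + ψ_{zz} + α²ψ + αβ = 0`. -/
theorem beltrami_gives_stream_function (α : ℝ) (hα : α ≠ 0)
    (Ω : Set (ℝ × ℝ)) (hΩopen : IsOpen Ω) (hΩconn : IsConnected Ω)
    (u : ℝ × ℝ → ℝ × ℝ × ℝ) (ψ : ℝ × ℝ → ℝ)
    (hu : ContDiffOn ℝ 1 u Ω) (hψ : ContDiffOn ℝ 2 ψ Ω)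
    -- stream function relations: ∂_z ψ = -u₁, ∂_{x̄} ψ = u₃
    (hψz : ∀ p ∈ Ω, deriv (fun z => ψ (p.1, z)) p.2 = -(u p).1)
    (hψx : ∀ p ∈ Ω, deriv (fun x => ψ (x, p.2)) p.1 = (u p).2.2)
    -- curl condition ∇×u = αu for ȳ-independent fields
    (hcurl1 : ∀ p ∈ Ω, -deriv (fun z => (u (p.1, z)).2.1) p.2 = α * (u p).1)
    (hcurl2 : ∀ p ∈ Ω, deriv (fun z => (u (p.1, z)).1) p.2
        - deriv (fun x => (u (x, p.2)).2.2) p.1 = α * (u p).2.1)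
    (hcurl3 : ∀ p ∈ Ω, deriv (fun x => (u (x, p.2)).2.1) p.1 = α * (u p).2.2) :
    ∃ β : ℝ, (∀ p ∈ Ω, (u p).2.1 = α * ψ p + β) ∧
      ∀ p ∈ Ω,
        deriv (fun x' => deriv (fun x'' => ψ (x'', p.2)) x') p.1
          + deriv (fun z' => deriv (fun z'' => ψ (p.1, z'')) z') p.2
          + α ^ 2 * ψ p + α * β = 0 := by
  obtain ⟨p₀, hp₀⟩ := hΩconn.nonempty
  set f : ℝ × ℝ → ℝ := fun q => (u q).2.1 - α * ψ q with hf_def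
  -- differentiability facts
  have hud : ∀ p ∈ Ω, DifferentiableAt ℝ u p := fun p hp =>
    (hu.contDiffAt (hΩopen.mem_nhds hp)).differentiableAt one_ne_zero
  have hψd : ∀ p ∈ Ω, DifferentiableAt ℝ ψ p := fun p hp =>
    (hψ.contDiffAt (hΩopen.mem_nhds hp)).differentiableAt (by norm_num)
  have hfd : ∀ p ∈ Ω, DifferentiableAt ℝ f p := fun p hp =>
    ((hud p hp).snd.fst).sub ((hψd p hp).const_mul α)
  -- the fderiv of f vanishes on Ω
  have hf0 : ∀ p ∈ Ω, fderiv ℝ f p = 0 := by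
    intro p hp
    have hxline : HasDerivAt (fun x : ℝ => (x, p.2)) ((1 : ℝ), (0 : ℝ)) p.1 :=
      (hasDerivAt_id p.1).prodMk (hasDerivAt_const p.1 p.2)
    have hzline : HasDerivAt (fun z : ℝ => (p.1, z)) ((0 : ℝ), (1 : ℝ)) p.2 :=
      (hasDerivAt_const p.2 p.1).prodMk (hasDerivAt_id p.2)
    -- partial derivatives of ψ
    have hψx' : fderiv ℝ ψ p (1, 0) = (u p).2.2 := by
      have h1 : HasDerivAt (fun x => ψ (x, p.2)) (fderiv ℝ ψ p (1, 0)) p.1 :=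
        (hψd p hp).hasFDerivAt.comp_hasDerivAt p.1 hxline
      rw [← h1.deriv]; exact hψx p hp
    have hψz' : fderiv ℝ ψ p (0, 1) = -(u p).1 := by
      have h1 : HasDerivAt (fun z => ψ (p.1, z)) (fderiv ℝ ψ p (0, 1)) p.2 :=
        (hψd p hp).hasFDerivAt.comp_hasDerivAt p.2 hzline
      rw [← h1.deriv]; exact hψz p hp
    -- partial derivatives of u₂
    have hu2d : DifferentiableAt ℝ (fun q => (u q).2.1) p := (hud p hp).snd.fst
    have hu2x : fderiv ℝ (fun q => (u q).2.1) p (1, 0) = α * (u p).2.2 := by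
      have h1 : HasDerivAt (fun x => (u (x, p.2)).2.1)
          (fderiv ℝ (fun q => (u q).2.1) p (1, 0)) p.1 :=
        hu2d.hasFDerivAt.comp_hasDerivAt (l := fun q => (u q).2.1) (f := fun x : ℝ => (x, p.2)) p.1 hxline
      rw [← h1.deriv]; exact hcurl3 p hp
    have hu2z : fderiv ℝ (fun q => (u q).2.1) p (0, 1) = -(α * (u p).1) := by
      have h1 : HasDerivAt (fun z => (u (p.1, z)).2.1)
          (fderiv ℝ (fun q => (u q).2.1) p (0, 1)) p.2 :=
        hu2d.hasFDerivAt.comp_hasDerivAt (l := fun q => (u q).2.1) (f := fun z : ℝ => (p.1, z)) p.2 hzline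
      rw [← h1.deriv]; linarith [hcurl1 p hp]
    have hsplit : fderiv ℝ f p =
        fderiv ℝ (fun q => (u q).2.1) p - α • fderiv ℝ ψ p := by
      rw [hf_def]
      rw [fderiv_fun_sub hu2d ((hψd p hp).const_mul α)]
      congr 1
      rw [fderiv_const_mul (hψd p hp)]
    refine ContinuousLinearMap.ext fun v => ?_
    have hv : v = v.1 • ((1 : ℝ), (0 : ℝ)) + v.2 • ((0 : ℝ), (1 : ℝ)) := by
      simp [Prod.ext_iff]
    rw [hsplit]
    simp only [ContinuousLinearMap.sub_apply, ContinuousLinearMap.smul_apply,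
      ContinuousLinearMap.zero_apply]
    rw [hv]
    simp only [map_add, map_smul, hψx', hψz', hu2x, hu2z, smul_eq_mul]
    ring
  -- f is constant on Ω
  have hconst : ∀ p ∈ Ω, f p = f p₀ :=
    fun p hp => const_of_fderiv_zero_aux hΩopen hΩconn.isPreconnected hfd hf0 p hp p₀ hp₀
  have hu2 : ∀ p ∈ Ω, (u p).2.1 = α * ψ p + f p₀ := by
    intro p hp
    have h := hconst p hp
    simp only [hf_def] at h ⊢
    linarith
  refine ⟨f p₀, hu2, ?_⟩
  -- the PDE
  intro p hp
  -- second x-derivative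
  have hUx : IsOpen {x : ℝ | (x, p.2) ∈ Ω} :=
    hΩopen.preimage (Continuous.prodMk_left p.2)
  have hevx : (fun x' => deriv (fun x'' => ψ (x'', p.2)) x') =ᶠ[nhds p.1]
      (fun x' => (u (x', p.2)).2.2) := by
    filter_upwards [hUx.mem_nhds (show (p.1, p.2) ∈ Ω from by simpa using hp)] with x hx
    exact hψx (x, p.2) hx
  have h2x : deriv (fun x' => deriv (fun x'' => ψ (x'', p.2)) x') p.1
      = deriv (fun x => (u (x, p.2)).2.2) p.1 := hevx.deriv_eq
  -- second z-derivative
  have hUz : IsOpen {z : ℝ | (p.1, z) ∈ Ω} :=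
    hΩopen.preimage (Continuous.prodMk_right p.1)
  have hevz : (fun z' => deriv (fun z'' => ψ (p.1, z'')) z') =ᶠ[nhds p.2]
      (fun z' => -(u (p.1, z')).1) := by
    filter_upwards [hUz.mem_nhds (show (p.1, p.2) ∈ Ω from by simpa using hp)] with z hz
    exact hψz (p.1, z) hz
  have h2z : deriv (fun z' => deriv (fun z'' => ψ (p.1, z'')) z') p.2
      = -deriv (fun z => (u (p.1, z)).1) p.2 := by
    rw [hevz.deriv_eq]
    exact deriv.neg
  have hc2 := hcurl2 p hp
  rw [h2x, h2z, hu2 p hp] at *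
  nlinarith [hc2]
end

section
/- In the symmetric lattice case with generators k₁ = k(cos ω, sin ω), k₂ = k(cos ω, -sin ω), ω ∈ (0, π/2), if c* = c(cos φ, sin φ) with c ≠ 0 satisfies both dispersion equations ρ(c*, k₁) = 0 and ρ(c*, k₂) = 0 (with common κ = κ(k) and a = g + σk² > 0), then 2κ cos φ sin φ + α(cos²φ - sin²φ) = 0; in particular if additionally cos(2φ) ≠ 0 then tan(2φ) = -α/κ. -/
open Real in
/-- Symmetric lattice case: if `c* = c(cos φ, sin φ)` with `c ≠ 0` satisfies both dispersion
equations for `k₁ = k(cos ω, sin ω)` and `k₂ = k(cos ω, -sin ω)`, `ω ∈ (0, π/2)`, then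
`2κ cos φ sin φ + α(cos²φ - sin²φ) = 0`; if moreover `cos(2φ) ≠ 0` then `tan(2φ) = -α/κ`. -/
theorem symmetric_lattice_angle (k ω α κ g σ c φ : ℝ)
    (hk : 0 < k) (hω : ω ∈ Set.Ioo 0 (π / 2)) (hc : c ≠ 0) (hg : 0 < g) (hσ : 0 < σ)
    (heq1 : c ^ 2 * (κ * (cos ω * cos φ + sin ω * sin φ) ^ 2
      - α * (cos ω * cos φ + sin ω * sin φ) * (cos ω * sin φ - sin ω * cos φ))
      = g + σ * k ^ 2)
    (heq2 : c ^ 2 * (κ * (cos ω * cos φ - sin ω * sin φ) ^ 2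
      - α * (cos ω * cos φ - sin ω * sin φ) * (cos ω * sin φ + sin ω * cos φ))
      = g + σ * k ^ 2) :
    2 * κ * cos φ * sin φ + α * (cos φ ^ 2 - sin φ ^ 2) = 0 ∧
    (cos (2 * φ) ≠ 0 → tan (2 * φ) = -α / κ) := by
  have hs : 0 < sin ω := sin_pos_of_pos_of_lt_pi hω.1 (by linarith [pi_pos, hω.2])
  have hcω : 0 < cos ω := cos_pos_of_mem_Ioo ⟨by linarith [pi_pos, hω.1], hω.2⟩
  have hc2 : (0:ℝ) < c ^ 2 := by positivity
  have hd : c ^ 2 * (2 * sin ω * cos ω) *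
      (2 * κ * cos φ * sin φ + α * (cos φ ^ 2 - sin φ ^ 2)) = 0 := by
    linear_combination heq1 - heq2
  have hmain : 2 * κ * cos φ * sin φ + α * (cos φ ^ 2 - sin φ ^ 2) = 0 := by
    have hne : c ^ 2 * (2 * sin ω * cos ω) ≠ 0 := by positivity
    exact (mul_eq_zero.mp hd).resolve_left hne
  refine ⟨hmain, fun h2 => ?_⟩
  have hsin2 : κ * sin (2 * φ) = -α * cos (2 * φ) := by
    rw [sin_two_mul, cos_two_mul']; linarith [hmain]
  rcases eq_or_ne κ 0 with hκ | hκ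
  · subst hκ
    have hα : α = 0 := by
      rcases mul_eq_zero.mp (by linarith [hsin2] : -α * cos (2 * φ) = 0) with h | h
      · linarith
      · exact absurd h h2
    subst hα
    nlinarith [heq1, hg, hσ, hk]
  · rw [tan_eq_sin_div_cos]
    field_simp
    linear_combination hsin2
end

section
/- If ω ∈ (0, π/2), n₁, n₂ ∈ ℤ and q_{n₁n₂} = 1, then (n₁, n₂) ∈ {(±1, 0), (0, ±1)} or n₁ = ±n₂ with 4n₁²cos²ω = 1 (when n₁ = n₂) or 4n₁²sin²ω = 1 (when n₁ = -n₂). -/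
open Real in
/-- If `ω ∈ (0, π/2)` and `q_{n₁n₂} = 1`, then `(n₁, n₂) ∈ {(±1,0), (0,±1)}`, or `n₁ = n₂`
with `4n₁²cos²ω = 1`, or `n₁ = -n₂` with `4n₁²sin²ω = 1`. -/
theorem lattice_length_one_classification (ω : ℝ) (hω : ω ∈ Set.Ioo 0 (π / 2))
    (n₁ n₂ : ℤ)
    (hq : ((n₁ + n₂ : ℝ)) ^ 2 * cos ω ^ 2 + ((n₁ - n₂ : ℝ)) ^ 2 * sin ω ^ 2 = 1) :
    ((n₁, n₂) = (1, 0) ∨ (n₁, n₂) = (-1, 0) ∨ (n₁, n₂) = (0, 1) ∨ (n₁, n₂) = (0, -1)) ∨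
    (n₁ = n₂ ∧ 4 * (n₁ : ℝ) ^ 2 * cos ω ^ 2 = 1) ∨
    (n₁ = -n₂ ∧ 4 * (n₁ : ℝ) ^ 2 * sin ω ^ 2 = 1) := by
  obtain ⟨hω0, hω1⟩ := hω
  have hs : 0 < sin ω := Real.sin_pos_of_pos_of_lt_pi hω0 (by linarith [Real.pi_pos])
  have hc : 0 < cos ω := Real.cos_pos_of_mem_Ioo ⟨by linarith [Real.pi_pos], hω1⟩
  have hs2 : 0 < sin ω ^ 2 := by positivity
  have hc2 : 0 < cos ω ^ 2 := by positivity
  have hpyth : sin ω ^ 2 + cos ω ^ 2 = 1 := Real.sin_sq_add_cos_sq ω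
  set A : ℤ := (n₁ + n₂) ^ 2 with hA
  set B : ℤ := (n₁ - n₂) ^ 2 with hB
  have hA0 : 0 ≤ A := sq_nonneg _
  have hB0 : 0 ≤ B := sq_nonneg _
  have key : (A : ℝ) * cos ω ^ 2 + (B : ℝ) * sin ω ^ 2 = 1 := by
    push_cast [hA, hB]; linarith [hq]
  -- classify: A = 0, or B = 0, or A = 1 ∧ B = 1
  have hcases : A = 0 ∨ B = 0 ∨ (A = 1 ∧ B = 1) := by
    by_contra h
    have hA1 : 1 ≤ A := by omega
    have hB1 : 1 ≤ B := by omega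
    have h2 : 2 ≤ A ∨ 2 ≤ B := by omega
    have hAr : (1 : ℝ) ≤ (A : ℝ) := by exact_mod_cast hA1
    have hBr : (1 : ℝ) ≤ (B : ℝ) := by exact_mod_cast hB1
    rcases h2 with h2 | h2
    · have : (2 : ℝ) ≤ (A : ℝ) := by exact_mod_cast h2
      nlinarith
    · have : (2 : ℝ) ≤ (B : ℝ) := by exact_mod_cast h2
      nlinarith
  rcases hcases with h | h | ⟨h1, h2⟩
  · -- n₁ = -n₂
    have hn : n₁ = -n₂ := by
      have := pow_eq_zero_iff (n := 2) (by norm_num) |>.mp h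
      omega
    right; right
    refine ⟨hn, ?_⟩
    have hr : ((n₁ : ℝ)) = -(n₂ : ℝ) := by exact_mod_cast hn
    rw [hr] at hq ⊢
    linear_combination hq
  · -- n₁ = n₂
    have hn : n₁ = n₂ := by
      have := pow_eq_zero_iff (n := 2) (by norm_num) |>.mp h
      omega
    right; left
    refine ⟨hn, ?_⟩
    have hr : ((n₁ : ℝ)) = (n₂ : ℝ) := by exact_mod_cast hn
    rw [hr] at hq ⊢
    linear_combination hq
  · left
    have h1' : (n₁ + n₂) * (n₁ + n₂) = 1 := by nlinarith [h1]
    have h2' : (n₁ - n₂) * (n₁ - n₂) = 1 := by nlinarith [h2]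
    have e1 := mul_self_eq_one_iff.mp h1'
    have e2 := mul_self_eq_one_iff.mp h2'
    have : (n₁ = 1 ∧ n₂ = 0) ∨ (n₁ = -1 ∧ n₂ = 0) ∨ (n₁ = 0 ∧ n₂ = 1) ∨ (n₁ = 0 ∧ n₂ = -1) := by
      omega
    rcases this with ⟨e, f⟩ | ⟨e, f⟩ | ⟨e, f⟩ | ⟨e, f⟩ <;> subst e <;> subst f <;> simp
end

section
/- Transversality from non-nested asymptote sets: let A₁, A₂ be real symmetric 2×2 matrices and c* ∈ ℝ² with (c*)ᵀA₁c* = (c*)ᵀA₂c* = 1. If the gradients A₁c* and A₂c* are parallel, then (A₁ - A₂)c* = 0 and A₁ - A₂ is positive or negative semidefinite; consequently one of the sets {c : cᵀAᵢc > 0} is contained in the other. -/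
open Matrix in
/-- If the gradients `A₁c*` and `A₂c*` of two quadratic forms with common value `1` at
`c* ≠ 0` are parallel, then `(A₁ - A₂)c* = 0`, `A₁ - A₂` is positive or negative
semidefinite, and one of the sets `{c : cᵀAᵢc > 0}` is contained in the other. -/
theorem tangential_intersection_nesting (A₁ A₂ : Matrix (Fin 2) (Fin 2) ℝ)
    (h₁ : A₁.IsSymm) (h₂ : A₂.IsSymm) (c : Fin 2 → ℝ) (hc : c ≠ 0)
    (hq₁ : c ⬝ᵥ (A₁ *ᵥ c) = 1) (hq₂ : c ⬝ᵥ (A₂ *ᵥ c) = 1)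
    (hpar : (∃ l : ℝ, A₁ *ᵥ c = l • (A₂ *ᵥ c)) ∨ A₂ *ᵥ c = 0) :
    (A₁ - A₂) *ᵥ c = 0 ∧
    ((∀ v : Fin 2 → ℝ, 0 ≤ v ⬝ᵥ ((A₁ - A₂) *ᵥ v)) ∨
      (∀ v : Fin 2 → ℝ, v ⬝ᵥ ((A₁ - A₂) *ᵥ v) ≤ 0)) ∧
    (({v : Fin 2 → ℝ | 0 < v ⬝ᵥ (A₂ *ᵥ v)} ⊆ {v : Fin 2 → ℝ | 0 < v ⬝ᵥ (A₁ *ᵥ v)}) ∨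
      ({v : Fin 2 → ℝ | 0 < v ⬝ᵥ (A₁ *ᵥ v)} ⊆ {v : Fin 2 → ℝ | 0 < v ⬝ᵥ (A₂ *ᵥ v)})) := by
  -- Step 1: (A₁ - A₂) *ᵥ c = 0
  have hker : (A₁ - A₂) *ᵥ c = 0 := by
    rcases hpar with ⟨l, hl⟩ | h0
    · have hl1 : l = 1 := by
        have : c ⬝ᵥ (A₁ *ᵥ c) = l * (c ⬝ᵥ (A₂ *ᵥ c)) := by
          rw [hl, dotProduct_smul]; ring_nf
        rw [hq₁, hq₂] at this; linarith
      subst hl1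
      rw [Matrix.sub_mulVec, hl, one_smul, sub_self]
    · exfalso
      rw [h0, dotProduct_zero] at hq₂
      exact one_ne_zero hq₂.symm
  set D := A₁ - A₂ with hD
  -- symmetry and det zero
  have hsymm : D 1 0 = D 0 1 := by
    have e1 := h₁.apply 0 1
    have e2 := h₂.apply 0 1
    simp [hD, Matrix.sub_apply, e1, e2]
  have hdet : D.det = 0 := by
    rw [← Matrix.exists_mulVec_eq_zero_iff]
    exact ⟨c, hc, hker⟩
  have hdet' : D 0 0 * D 1 1 - D 0 1 * D 1 0 = 0 := by
    rw [← Matrix.det_fin_two]; exact hdet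
  have hdet2 : D 0 0 * D 1 1 = D 0 1 * D 0 1 := by
    rw [hsymm] at hdet'; linarith
  have hquad : ∀ v : Fin 2 → ℝ,
      v ⬝ᵥ (D *ᵥ v) = D 0 0 * (v 0)^2 + 2 * (D 0 1) * v 0 * v 1 + D 1 1 * (v 1)^2 := by
    intro v
    simp [dotProduct, Matrix.mulVec, Fin.sum_univ_two, hsymm]
    ring
  have key : ∀ a b d : ℝ, a * d = b * b → 0 ≤ a + d →
      ∀ x y : ℝ, 0 ≤ a * x^2 + 2 * b * x * y + d * y^2 := by
    intro a b d hdet hsum x y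
    have hprod : 0 ≤ a * d := by nlinarith [sq_nonneg b]
    have ha : 0 ≤ a := by nlinarith
    have hd : 0 ≤ d := by nlinarith
    rcases eq_or_lt_of_le ha with ha0 | ha0
    · have hb : b = 0 := by nlinarith [sq_nonneg b]
      rw [← ha0, hb]
      have := mul_nonneg hd (sq_nonneg y)
      nlinarith
    · have : 0 ≤ (a * x + b * y)^2 := sq_nonneg _
      have expand : a * (a * x^2 + 2 * b * x * y + d * y^2) = (a * x + b * y)^2 := by
        nlinarith []
      nlinarith [sq_nonneg (a * x + b * y)]
  have hsemi : (∀ v : Fin 2 → ℝ, 0 ≤ v ⬝ᵥ (D *ᵥ v)) ∨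
      (∀ v : Fin 2 → ℝ, v ⬝ᵥ (D *ᵥ v) ≤ 0) := by
    rcases le_or_gt 0 (D 0 0 + D 1 1) with hs | hs
    · left
      intro v
      rw [hquad v]
      exact key _ _ _ hdet2 hs (v 0) (v 1)
    · right
      intro v
      rw [hquad v]
      have := key (-(D 0 0)) (-(D 0 1)) (-(D 1 1)) (by nlinarith) (by linarith) (v 0) (v 1)
      nlinarith [this]
  refine ⟨hker, hsemi, ?_⟩
  have hdiff : ∀ v : Fin 2 → ℝ, v ⬝ᵥ (D *ᵥ v) = v ⬝ᵥ (A₁ *ᵥ v) - v ⬝ᵥ (A₂ *ᵥ v) := by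
    intro v; rw [hD, Matrix.sub_mulVec, dotProduct_sub]
  rcases hsemi with hpos | hneg
  · left; intro v hv
    have := hpos v
    rw [hdiff v] at this
    simp only [Set.mem_setOf_eq] at *
    linarith
  · right; intro v hv
    have := hneg v
    rw [hdiff v] at this
    simp only [Set.mem_setOf_eq] at *
    linarith
end
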